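/- Let I be a network coding instance and let 0 < ε < 1/2. If I is (ε, R, n)-feasible by a group network code, then I is (0, R, n)-feasible by a group network code. -/

import Mathlib

open scoped Classical
open Finset

noncomputable section

/-- A network coding instance `I = (N, S, T, M)`: a finite directed acyclic graph with
edge capacities, source nodes (no incoming edges), terminal nodes (no outgoing edges),
and a demand relation (`demands s t` means terminal `t` demands source `s`). -/
structure NetworkInstance where
  V : Type
  [fintypeV : Fintype V]
  [decEqV : DecidableEq V]
  E : Finset (V × V)
  cap : V × V → ℝ
  cap_pos : ∀ e ∈ E, 0 < cap e
  S : Finset V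
  T : Finset V
  demands : V → V → Prop
  src_no_in : ∀ s ∈ S, ∀ e ∈ E, e.2 ≠ s
  ter_no_out : ∀ t ∈ T, ∀ e ∈ E, e.1 ≠ t
  disjointST : Disjoint S T
  acyclic : ∃ ord : V → ℕ, ∀ e ∈ E, ord e.1 < ord e.2

attribute [instance] NetworkInstance.fintypeV NetworkInstance.decEqV

/-- A network code of blocklength `n` and rate vector `R` on the instance `I`.
Sources are independent and uniform on their (finite, nonempty) alphabets, which is modelled
by taking the whole product of the source alphabets as the (uniform) sample space.
`ge e` is the global encoding function of edge `e` (a function of the source message vector),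
`dec t` the decoding function of terminal `t` (a function of the messages on incoming edges
of `t`, producing reconstructions of the demanded sources).
`local_enc` states that the message on an edge `e = (u,v)` is determined by the messages on
the incoming edges of `u` (together with the source message at `u`, when `u` is a source).
`rate` states `H(X_i) = log₂|𝒳_i| ≥ n·R_i`, and `capBound` states `log₂|𝒳_e| ≤ n·R_e`. -/
structure NetworkCode (I : NetworkInstance) (R : I.V → ℝ) (n : ℕ) where
  srcA : I.V → Type
  edgeA : I.V × I.V → Type
  [finSrc : ∀ v, Fintype (srcA v)]
  [finEdge : ∀ e, Fintype (edgeA e)]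
  [neSrc : ∀ v, Nonempty (srcA v)]
  [neEdge : ∀ e, Nonempty (edgeA e)]
  ge : (e : I.V × I.V) → ((s : {v // v ∈ I.S}) → srcA s.1) → edgeA e
  dec : (t : {v // v ∈ I.T}) →
    ((f : {e : I.V × I.V // e ∈ I.E ∧ e.2 = t.1}) → edgeA f.1) →
    ((s : {v // v ∈ I.S ∧ I.demands v t.1}) → srcA s.1)
  local_enc : ∀ e ∈ I.E, ∀ x y : ((s : {v // v ∈ I.S}) → srcA s.1),
    (∀ s : {v // v ∈ I.S}, (s : I.V) = e.1 → x s = y s) →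
    (∀ f ∈ I.E, f.2 = e.1 → ge f x = ge f y) →
    ge e x = ge e y
  rate : ∀ v ∈ I.S, (2 : ℝ) ^ ((n : ℝ) * R v) ≤ Fintype.card (srcA v)
  capBound : ∀ e ∈ I.E, (Fintype.card (edgeA e) : ℝ) ≤ (2 : ℝ) ^ ((n : ℝ) * I.cap e)

attribute [instance] NetworkCode.finSrc NetworkCode.finEdge NetworkCode.neSrc NetworkCode.neEdge

/-- The source message vector space `𝒳_S = ∏ 𝒳_i`; the sources being independent and
uniform, the probability space is the uniform distribution on `Msg`. -/
abbrev NetworkCode.Msg {I : NetworkInstance} {R : I.V → ℝ} {n : ℕ} (C : NetworkCode I R n) : Type :=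
  (s : {v // v ∈ I.S}) → C.srcA s.1

/-- Terminal `t` decodes the source vector `x` correctly. -/
def NetworkCode.Correct {I : NetworkInstance} {R : I.V → ℝ} {n : ℕ} (C : NetworkCode I R n)
    (t : {v // v ∈ I.T}) (x : C.Msg) : Prop :=
  C.dec t (fun f => C.ge f.1 x) = fun s : {v : I.V // v ∈ I.S ∧ I.demands v t.1} => x ⟨s.1, s.2.1⟩

/-- `x` is "good": every terminal decodes it correctly. -/
def NetworkCode.Good {I : NetworkInstance} {R : I.V → ℝ} {n : ℕ} (C : NetworkCode I R n)
    (x : C.Msg) : Prop := ∀ t, C.Correct t x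

/-- The code has decoding error probability at most `ε` at every terminal
(w.r.t. the uniform distribution on source messages). -/
def NetworkCode.Achieves {I : NetworkInstance} {R : I.V → ℝ} {n : ℕ} (C : NetworkCode I R n)
    (ε : ℝ) : Prop :=
  ∀ t : {v // v ∈ I.T},
    ((Finset.univ.filter fun x : C.Msg => ¬ C.Correct t x).card : ℝ) ≤ ε * Fintype.card C.Msg

/-- `I` is `(ε, R, n)`-feasible. -/
def Feasible (I : NetworkInstance) (ε : ℝ) (R : I.V → ℝ) (n : ℕ) : Prop :=
  ∃ C : NetworkCode I R n, C.Achieves ε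

/-- The instance `I'` obtained from `I` by removing the edge `e`. -/
def NetworkInstance.removeEdge (I : NetworkInstance) (e : I.V × I.V) : NetworkInstance where
  V := I.V
  fintypeV := I.fintypeV
  decEqV := I.decEqV
  E := I.E.erase e
  cap := I.cap
  cap_pos := fun f hf => I.cap_pos f (Finset.mem_of_mem_erase hf)
  S := I.S
  T := I.T
  demands := I.demands
  src_no_in := fun s hs f hf => I.src_no_in s hs f (Finset.mem_of_mem_erase hf)
  ter_no_out := fun t ht f hf => I.ter_no_out t ht f (Finset.mem_of_mem_erase hf)
  disjointST := I.disjointST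
  acyclic := ⟨I.acyclic.choose, fun f hf => I.acyclic.choose_spec f (Finset.mem_of_mem_erase hf)⟩

/-- The reduced rate vector `R - R_{e*}·1`, i.e. `i ↦ max 0 (R_i - R_{e*})`. -/
def reducedRate (I : NetworkInstance) (R : I.V → ℝ) (e : I.V × I.V) : I.V → ℝ :=
  fun v => max 0 (R v - I.cap e)

/-- A group characterization of a network code: a finite group `G` with subgroups `G_f` for
every source and every edge, together with a balanced map `lift : G → 𝒳_S` (pushing the
uniform distribution on `G` to the uniform distribution on source vectors), such that the
value of each source (resp. edge) message is, up to bijective relabeling, the left coset of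
`G_f` of the uniform group element; w.l.o.g. `∩_{i∈S} G_i = {1}`. There is no restriction
on the decoding functions. -/
structure GroupChar {I : NetworkInstance} {R : I.V → ℝ} {n : ℕ}
    (C : NetworkCode I R n) where
  G : Type
  [grp : Group G]
  [fin : Fintype G]
  Gs : {v // v ∈ I.S} → Subgroup G
  Ge : {e : I.V × I.V // e ∈ I.E} → Subgroup G
  lift : G → C.Msg
  balanced : ∀ x : C.Msg,
    (Finset.univ.filter fun g : G => lift g = x).card * Fintype.card C.Msg = Fintype.card G
  src_char : ∀ s : {v // v ∈ I.S}, ∀ g g' : G,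
    g⁻¹ * g' ∈ Gs s ↔ lift g s = lift g' s
  edge_char : ∀ e : {e : I.V × I.V // e ∈ I.E}, ∀ g g' : G,
    g⁻¹ * g' ∈ Ge e ↔ C.ge e.1 (lift g) = C.ge e.1 (lift g')
  triv_inter : (⨅ s : {v // v ∈ I.S}, Gs s) = ⊥


/-- If `K ≤ H` properly, then `2 * |K| ≤ |H|`. -/
lemma aux_two_mul_card_le {G : Type} [Group G] [Fintype G] (K H : Subgroup G)
    (hKH : K ≤ H) (hne : ¬ H ≤ K) : 2 * Nat.card K ≤ Nat.card H := by
  obtain ⟨x, hxH, hxK⟩ := SetLike.not_le_iff_exists.mp hne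
  letI : Fintype K := Fintype.ofFinite K
  letI : Fintype H := Fintype.ofFinite H
  have hlt : Nat.card K < Nat.card H := by
    rw [Nat.card_eq_fintype_card, Nat.card_eq_fintype_card]
    refine Fintype.card_lt_of_injective_of_notMem (Subgroup.inclusion hKH)
      (Subgroup.inclusion_injective hKH) (b := ⟨x, hxH⟩) ?_
    rintro ⟨⟨y, hy⟩, hyx⟩
    apply hxK
    have : y = x := congrArg Subtype.val hyx
    exact this ▸ hy
  obtain ⟨m, hm⟩ := Subgroup.card_dvd_of_le hKH
  have hKpos : 0 < Nat.card K := Nat.card_pos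
  have hm2 : 2 ≤ m := by
    rcases Nat.lt_or_ge m 2 with hm' | hm'
    · interval_cases m <;> omega
    · exact hm'
  calc 2 * Nat.card K ≤ m * Nat.card K := Nat.mul_le_mul_right _ hm2
    _ = Nat.card K * m := mul_comm _ _
    _ = Nat.card H := hm.symm

/-- The zero-error decoder built from a group characterization: decode by searching for any
group element consistent with the received edge messages. -/
def zeroDec {I : NetworkInstance} {R : I.V → ℝ} {n : ℕ} (C : NetworkCode I R n)
    (gc : GroupChar C) :
    (t : {v // v ∈ I.T}) →
    ((f : {e : I.V × I.V // e ∈ I.E ∧ e.2 = t.1}) → C.edgeA f.1) →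
    ((s : {v // v ∈ I.S ∧ I.demands v t.1}) → C.srcA s.1) := fun t msgs =>
  if hex : (∃ g : gc.G, ∀ f : {e : I.V × I.V // e ∈ I.E ∧ e.2 = t.1},
      C.ge f.1 (gc.lift g) = msgs f)
    then fun s => gc.lift hex.choose ⟨s.1, s.2.1⟩
    else C.dec t msgs

/-- The network code with the same encoders but the zero-error decoder. -/
def zeroCode {I : NetworkInstance} {R : I.V → ℝ} {n : ℕ} (C : NetworkCode I R n)
    (gc : GroupChar C) : NetworkCode I R n :=
  { C with dec := zeroDec C gc }

/-- **Theorem 4.** For `0 < ε < 1/2`: if `I` is `(ε,R,n)`-feasible by a group network code,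
then `I` is `(0,R,n)`-feasible by a group network code. -/
theorem group_code_eps_error_to_zero_error
    (I : NetworkInstance) (ε : ℝ) (R : I.V → ℝ) (n : ℕ)
    (hε0 : 0 < ε) (hε : ε < 1/2)
    (h : ∃ C : NetworkCode I R n, C.Achieves ε ∧ Nonempty (GroupChar C)) :
    ∃ C : NetworkCode I R n, C.Achieves 0 ∧ Nonempty (GroupChar C) := by
  obtain ⟨C, hA, ⟨gc⟩⟩ := h
  letI : Group gc.G := gc.grp
  letI : Fintype gc.G := gc.fin
  have hMsgpos : 0 < Fintype.card C.Msg := Fintype.card_pos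
  have hGpos : 0 < Fintype.card gc.G := Fintype.card_pos
  -- `lift` is surjective
  have hsurj : ∀ x : C.Msg, ∃ g : gc.G, gc.lift g = x := by
    intro x
    by_contra hns
    push_neg at hns
    have hb := gc.balanced x
    have : (Finset.univ.filter fun g : gc.G => gc.lift g = x) = ∅ :=
      Finset.filter_eq_empty_iff.mpr fun {g} _ => hns g
    rw [this] at hb
    simp at hb
    omega
  -- strictly more than half of the messages are good at every terminal
  have hgoodMsg : ∀ t : {v // v ∈ I.T},
      Fintype.card C.Msg < 2 * (Finset.univ.filter fun x : C.Msg => C.Correct t x).card := by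
    intro t
    have hsum := Finset.card_filter_add_card_filter_not
      (s := (Finset.univ : Finset C.Msg)) (p := fun x => C.Correct t x)
    rw [Finset.card_univ] at hsum
    have hB := hA t
    have hBR : (2 * ((Finset.univ.filter fun x : C.Msg => ¬ C.Correct t x).card) : ℝ)
        < Fintype.card C.Msg := by
      have hM : (0 : ℝ) < Fintype.card C.Msg := by exact_mod_cast hMsgpos
      nlinarith
    have hBN : 2 * (Finset.univ.filter fun x : C.Msg => ¬ C.Correct t x).card
        < Fintype.card C.Msg := by exact_mod_cast hBR
    omega
  -- the key lemma: at terminal t, the incoming edge messages determine each demanded source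
  have key : ∀ (t : {v // v ∈ I.T}) (s : {v // v ∈ I.S ∧ I.demands v t.1}) (g g' : gc.G),
      (∀ f : {e : I.V × I.V // e ∈ I.E ∧ e.2 = t.1},
        C.ge f.1 (gc.lift g) = C.ge f.1 (gc.lift g')) →
      gc.lift g ⟨s.1, s.2.1⟩ = gc.lift g' ⟨s.1, s.2.1⟩ := by
    intro t s
    set H : Subgroup gc.G :=
      ⨅ f : {e : I.V × I.V // e ∈ I.E ∧ e.2 = t.1}, gc.Ge ⟨f.1, f.2.1⟩ with hHdef
    have hmain : H ≤ gc.Gs ⟨s.1, s.2.1⟩ := by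
      by_contra hne
      set Ks : Subgroup gc.G := H ⊓ gc.Gs ⟨s.1, s.2.1⟩ with hKdef
      have hKH : Ks ≤ H := inf_le_left
      have hneK : ¬ H ≤ Ks := fun hh => hne (hh.trans inf_le_right)
      have h2K := aux_two_mul_card_le Ks H hKH hneK
      set Gd : Finset gc.G := Finset.univ.filter fun g => C.Correct t (gc.lift g) with hGd
      set GM : Finset C.Msg := Finset.univ.filter fun x => C.Correct t x with hGM
      -- Gd.card * |Msg| = GM.card * |G|
      have hGdGM : Gd.card * Fintype.card C.Msg = GM.card * Fintype.card gc.G := by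
        have hfib : Gd.card = ∑ x ∈ GM, (Gd.filter fun g => gc.lift g = x).card :=
          Finset.card_eq_sum_card_fiberwise (fun g hg => by
            simp only [hGd, Finset.mem_coe, Finset.mem_filter, Finset.mem_univ, true_and] at hg
            simp [hGM, hg])
        have hfib2 : ∀ x ∈ GM,
            (Gd.filter fun g => gc.lift g = x).card * Fintype.card C.Msg
              = Fintype.card gc.G := by
          intro x hx
          simp only [hGM, Finset.mem_filter, Finset.mem_univ, true_and] at hx
          have : (Gd.filter fun g => gc.lift g = x)
              = Finset.univ.filter fun g : gc.G => gc.lift g = x := by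
            ext g
            simp only [hGd, Finset.mem_filter, Finset.mem_univ, true_and]
            constructor
            · rintro ⟨_, h2⟩; exact h2
            · intro h2; exact ⟨h2 ▸ hx, h2⟩
          rw [this]
          exact gc.balanced x
        calc Gd.card * Fintype.card C.Msg
            = (∑ x ∈ GM, (Gd.filter fun g => gc.lift g = x).card) * Fintype.card C.Msg := by
              rw [← hfib]
          _ = ∑ x ∈ GM, (Gd.filter fun g => gc.lift g = x).card * Fintype.card C.Msg :=
              Finset.sum_mul ..
          _ = ∑ _x ∈ GM, Fintype.card gc.G := Finset.sum_congr rfl hfib2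
          _ = GM.card * Fintype.card gc.G := by rw [Finset.sum_const, smul_eq_mul]
      -- more than half of G is good
      have hGdbig : Fintype.card gc.G < 2 * Gd.card := by
        have h1 := hgoodMsg t
        rw [← hGM] at h1
        have hcR : (Gd.card : ℝ) * Fintype.card C.Msg
            = GM.card * Fintype.card gc.G := by exact_mod_cast hGdGM
        have h1R : (Fintype.card C.Msg : ℝ) < 2 * GM.card := by exact_mod_cast h1
        have hMR : (0 : ℝ) < Fintype.card C.Msg := by exact_mod_cast hMsgpos
        have hGR : (0 : ℝ) < Fintype.card gc.G := by exact_mod_cast hGpos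
        have : (Fintype.card gc.G : ℝ) < 2 * Gd.card := by
          clear hne hneK hKH
          nlinarith [hcR, h1R, hMR, hGR]
        exact_mod_cast this
      -- at most half of G is good: count goods fiberwise over cosets of H
      letI : Fintype (gc.G ⧸ H) := Fintype.ofFinite _
      letI : Fintype Ks := Fintype.ofFinite Ks
      have hcoset : Gd.card ≤ Fintype.card (gc.G ⧸ H) * Nat.card Ks := by
        have hfib : Gd.card = ∑ q : gc.G ⧸ H,
            (Gd.filter fun g => QuotientGroup.mk g = q).card :=
          Finset.card_eq_sum_card_fiberwise (fun g _ => Finset.mem_univ _)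
        rw [hfib]
        have hbound : ∀ q : gc.G ⧸ H,
            (Gd.filter fun g => QuotientGroup.mk g = q).card ≤ Nat.card Ks := by
          intro q
          set F := Gd.filter fun g => QuotientGroup.mk g = q with hF
          rcases F.eq_empty_or_nonempty with hFe | ⟨g₀, hg₀⟩
          · rw [hFe]; simp
          · rw [Nat.card_eq_fintype_card]
            rw [← Finset.card_univ (α := Ks)]
            have hmemK : ∀ g ∈ F, g₀⁻¹ * g ∈ Ks := by
              intro g hg
              simp only [hF, hGd, Finset.mem_filter, Finset.mem_univ, true_and] at hg hg₀
              obtain ⟨hgc, hgq⟩ := hg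
              obtain ⟨hg₀c, hg₀q⟩ := hg₀
              have hinH : g₀⁻¹ * g ∈ H :=
                QuotientGroup.eq.mp (hg₀q.trans hgq.symm)
              have hedges : ∀ f : {e : I.V × I.V // e ∈ I.E ∧ e.2 = t.1},
                  C.ge f.1 (gc.lift g₀) = C.ge f.1 (gc.lift g) := by
                intro f
                exact (gc.edge_char ⟨f.1, f.2.1⟩ g₀ g).mp
                  ((iInf_le (fun f : {e : I.V × I.V // e ∈ I.E ∧ e.2 = t.1} =>
                    gc.Ge ⟨f.1, f.2.1⟩) f) hinH)
              have hargeq : (fun f : {e : I.V × I.V // e ∈ I.E ∧ e.2 = t.1} =>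
                  C.ge f.1 (gc.lift g₀))
                  = fun f : {e : I.V × I.V // e ∈ I.E ∧ e.2 = t.1} =>
                    C.ge f.1 (gc.lift g) := by
                funext f
                exact hedges f
              have hdeceq : C.dec t (fun f => C.ge f.1 (gc.lift g₀))
                  = C.dec t (fun f => C.ge f.1 (gc.lift g)) :=
                congrArg (C.dec t) hargeq
              have hsrceq : gc.lift g₀ ⟨s.1, s.2.1⟩ = gc.lift g ⟨s.1, s.2.1⟩ := by
                have h1 := hg₀c
                have h2 := hgc
                unfold NetworkCode.Correct at h1 h2
                have := (h1.symm.trans hdeceq).trans h2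
                exact congrFun this s
              exact ⟨hinH, (gc.src_char ⟨s.1, s.2.1⟩ g₀ g).mpr hsrceq⟩
            refine Finset.card_le_card_of_injOn
              (fun g => if hg : g ∈ F then (⟨g₀⁻¹ * g, hmemK g hg⟩ : Ks)
                else ⟨1, Ks.one_mem⟩)
              (fun g _ => Finset.mem_univ _) ?_
            intro a ha b hb hab
            simp only [Finset.mem_coe] at ha hb
            dsimp only at hab
            rw [dif_pos ha, dif_pos hb] at hab
            have : g₀⁻¹ * a = g₀⁻¹ * b := congrArg Subtype.val hab
            exact mul_left_cancel this
        calc (∑ q : gc.G ⧸ H, (Gd.filter fun g => QuotientGroup.mk g = q).card)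
            ≤ ∑ _q : gc.G ⧸ H, Nat.card Ks :=
              Finset.sum_le_sum fun q _ => hbound q
          _ = Fintype.card (gc.G ⧸ H) * Nat.card Ks := by
              rw [Finset.sum_const, smul_eq_mul, Finset.card_univ]
      have hlag : Nat.card gc.G = Nat.card (gc.G ⧸ H) * Nat.card H :=
        Subgroup.card_eq_card_quotient_mul_card_subgroup H
      have hfinal : 2 * Gd.card ≤ Fintype.card gc.G := by
        calc 2 * Gd.card ≤ 2 * (Fintype.card (gc.G ⧸ H) * Nat.card Ks) := by omega
          _ = Fintype.card (gc.G ⧸ H) * (2 * Nat.card Ks) := by ring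
          _ ≤ Fintype.card (gc.G ⧸ H) * Nat.card H := Nat.mul_le_mul_left _ h2K
          _ = Nat.card (gc.G ⧸ H) * Nat.card H := by
              simp [Nat.card_eq_fintype_card]
          _ = Nat.card gc.G := hlag.symm
          _ = Fintype.card gc.G := Nat.card_eq_fintype_card
      omega
    intro g g' hgg
    have hmem : g⁻¹ * g' ∈ H := by
      refine Subgroup.mem_iInf.mpr fun f => ?_
      exact (gc.edge_char ⟨f.1, f.2.1⟩ g g').mpr (hgg f)
    exact (gc.src_char ⟨s.1, s.2.1⟩ g g').mp (hmain hmem)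
  -- the zero-error code: same encoders, new decoders
  refine ⟨zeroCode C gc, ?_, ?_⟩
  · -- achieves zero error
    intro t
    have hallcorrect : ∀ x : (zeroCode C gc).Msg, (zeroCode C gc).Correct t x := by
      intro x
      obtain ⟨g, hg⟩ := hsurj x
      have hex : ∃ g' : gc.G, ∀ f : {e : I.V × I.V // e ∈ I.E ∧ e.2 = t.1},
          C.ge f.1 (gc.lift g') = C.ge f.1 x := ⟨g, fun f => by rw [hg]⟩
      show (zeroCode C gc).dec t (fun f => (zeroCode C gc).ge f.1 x) = _
      show zeroDec C gc t (fun f => C.ge f.1 x) = _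
      unfold zeroDec
      rw [dif_pos hex]
      funext s
      have hkey := key t s hex.choose g fun f => by rw [hex.choose_spec f, hg]
      rw [hkey, hg]
    have hempty : (Finset.univ.filter fun x : (zeroCode C gc).Msg =>
        ¬ (zeroCode C gc).Correct t x) = ∅ :=
      Finset.filter_eq_empty_iff.mpr fun {x} _ hx => hx (hallcorrect x)
    rw [hempty]
    simp
  · -- the same group characterization works
    refine ⟨?_⟩
    exact {
      G := gc.G
      grp := gc.grp
      fin := gc.fin
      Gs := gc.Gs
      Ge := gc.Ge
      lift := gc.lift
      balanced := gc.balanced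
      src_char := gc.src_char
      edge_char := gc.edge_char
      triv_inter := gc.triv_inter }

end
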